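/- Fibres of Bergman projections lie in one gallery class (Lemma 3.14): Let F be a one-dimensional tropical fan in ℝ^n with primitive generators v_1, …, v_q and weights ω_1, …, ω_q, and let π : ℤ^n → ℤ^k be a ℤ-linear map satisfying: (i) for every index j, the image π(v_j) is either 0, or a positive integer multiple of a standard basis vector e_s (1 ≤ s ≤ k), or a positive integer multiple of −(e_1 + ⋯ + e_k); (ii) for every s ∈ {1,…,k}, Σ ω_j c_j = 1, the sum running over indices j with π(v_j) = c_j e_s, c_j a positive integer; and (iii) Σ ω_j c_j = 1, the sum running over indices j with π(v_j) = −c_j (e_1 + ⋯ + e_k), c_j a positive integer. Then for any two distinct indices a, b with π(v_a) ≠ 0 and π(v_b) ≠ 0 there exists a gallery of F on (a, b); in particular all rays of F not mapped to 0 by π lie in a single equivalence class of the gallery relation. -/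
import Mathlib


/-- Integer pairing of a functional `l ∈ (ℤⁿ)^∨` with a vector `x ∈ ℤⁿ`. -/
def dotZ {n : ℕ} (l x : Fin n → ℤ) : ℤ := ∑ j, l j * x j

/-- Value of the nonnegative tropical regular function `max(0, l₁, …, l_k)` at `x ∈ ℤⁿ`. -/
def tropEvalZ {n k : ℕ} (l : Fin k → Fin n → ℤ) (x : Fin n → ℤ) : ℤ :=
  Finset.univ.fold max 0 (fun s => dotZ (l s) x)

/-- A one-dimensional tropical fan in ℝⁿ: pairwise distinct primitive integer vectors
`v i` (the primitive generators of the rays) spanning ℝⁿ, with positive integer weights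
`w i`, subject to the balancing condition `∑ i, w i • v i = 0`. -/
structure TropFan1 (n q : ℕ) where
  v : Fin q → Fin n → ℤ
  w : Fin q → ℤ
  v_inj : Function.Injective v
  v_prim : ∀ i, Finset.univ.gcd (v i) = 1
  w_pos : ∀ i, 0 < w i
  balanced : ∑ i, w i • v i = 0
  spans : Submodule.span ℝ (Set.range fun i => fun j => ((v i j : ℝ))) = ⊤

/-- A gallery of `F` on the pair of distinct indices `(a, b)`. -/
def IsGallery {n q : ℕ} (F : TropFan1 n q) (a b : Fin q) (l : Fin n → ℤ) : Prop :=
  a ≠ b ∧ F.w a = 1 ∧ F.w b = 1 ∧ dotZ l (F.v a) = 1 ∧ dotZ l (F.v b) = -1 ∧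
    ∀ j, j ≠ a → j ≠ b → dotZ l (F.v j) = 0

lemma dotZ_proj {n k : ℕ} (π : (Fin n → ℤ) →ₗ[ℤ] (Fin k → ℤ)) (s : Fin k) (x : Fin n → ℤ) :
    dotZ (fun j => π (Pi.single j 1) s) x = π x s := by
  have hx : x = ∑ j, x j • Pi.single j (1:ℤ) := by
    funext m
    simp [Finset.sum_apply, Pi.single_apply, mul_comm]
  conv_rhs => rw [hx]
  rw [map_sum]
  simp only [map_smul, Finset.sum_apply, Pi.smul_apply, smul_eq_mul]
  simp [dotZ, mul_comm]

lemma dotZ_sub {n : ℕ} (l1 l2 x : Fin n → ℤ) :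
    dotZ (fun j => l1 j - l2 j) x = dotZ l1 x - dotZ l2 x := by
  simp [dotZ, sub_mul, Finset.sum_sub_distrib]

lemma dotZ_neg {n : ℕ} (l x : Fin n → ℤ) :
    dotZ (fun j => -(l j)) x = -(dotZ l x) := by
  simp [dotZ]

lemma sum_eq_one_unique {α : Type*} (S : Finset α) (f : α → ℤ)
    (hf : ∀ j ∈ S, 1 ≤ f j) (hs : ∑ j ∈ S, f j = 1) :
    ∃ a, S = {a} ∧ f a = 1 := by
  have hcard : (S.card : ℤ) ≤ 1 := by
    calc (S.card : ℤ) = S.card • (1:ℤ) := by simp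
    _ ≤ ∑ j ∈ S, f j := Finset.card_nsmul_le_sum S f 1 hf
    _ = 1 := hs
  have hne : S.Nonempty := by
    rcases S.eq_empty_or_nonempty with h | h
    · simp [h] at hs
    · exact h
  have h1 : S.card = 1 := le_antisymm (by exact_mod_cast hcard) hne.card_pos
  obtain ⟨a, ha⟩ := Finset.card_eq_one.mp h1
  exact ⟨a, ha, by simpa [ha] using hs⟩


open scoped Classical in
/-- Fibres of Bergman projections lie in one gallery class (Lemma 3.14): if the
ℤ-linear map `π` pushes `F` forward to the one-dimensional Bergman fan in ℝᵏ with
weights `1`, then any two rays of `F` not killed by `π` are joined by a gallery. -/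
theorem bergman_fibre_single_class {n q k : ℕ} (hk : 0 < k) (F : TropFan1 n q)
    (π : (Fin n → ℤ) →ₗ[ℤ] (Fin k → ℤ))
    (h1 : ∀ j : Fin q, π (F.v j) = 0 ∨
        (∃ (s : Fin k) (c : ℤ), 0 < c ∧ π (F.v j) = c • Pi.single s 1) ∨
        (∃ c : ℤ, 0 < c ∧ π (F.v j) = fun _ => -c))
    (h2 : ∀ s : Fin k,
        ∑ j ∈ Finset.univ.filter
            (fun j => ∃ c : ℤ, 0 < c ∧ π (F.v j) = c • Pi.single s 1),
          F.w j * (π (F.v j) s) = 1)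
    (h3 : ∑ j ∈ Finset.univ.filter
            (fun j => ∃ c : ℤ, 0 < c ∧ π (F.v j) = fun _ => -c),
          F.w j * (-(π (F.v j) ⟨0, hk⟩)) = 1) :
    ∀ a b : Fin q, a ≠ b → π (F.v a) ≠ 0 → π (F.v b) ≠ 0 →
      ∃ l : Fin n → ℤ, IsGallery F a b l := by
  -- Uniqueness for the `e_s`-type rays
  have key2 : ∀ (s : Fin k) (j : Fin q), (∃ c : ℤ, 0 < c ∧ π (F.v j) = c • Pi.single s 1) →
      F.w j = 1 ∧ π (F.v j) = Pi.single s 1 ∧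
        ∀ j', (∃ c : ℤ, 0 < c ∧ π (F.v j') = c • Pi.single s 1) → j' = j := by
    intro s j hj
    have hf : ∀ j' ∈ Finset.univ.filter
        (fun j => ∃ c : ℤ, 0 < c ∧ π (F.v j) = c • Pi.single s 1),
        1 ≤ F.w j' * (π (F.v j') s) := by
      intro j' hj'
      rw [Finset.mem_filter] at hj'
      obtain ⟨-, c, hc, hπ⟩ := hj'
      have hcs : π (F.v j') s = c := by rw [hπ]; simp
      rw [hcs]
      have hw : 1 ≤ F.w j' := F.w_pos j'
      have hc' : 1 ≤ c := hc
      nlinarith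
    obtain ⟨a0, hS, hval⟩ := sum_eq_one_unique
      (Finset.univ.filter (fun j => ∃ c : ℤ, 0 < c ∧ π (F.v j) = c • Pi.single s 1))
      (fun j => F.w j * (π (F.v j) s)) hf (h2 s)
    have hmem : ∀ j', (∃ c : ℤ, 0 < c ∧ π (F.v j') = c • Pi.single s 1) → j' = a0 := by
      intro j' hj'
      have : j' ∈ Finset.univ.filter
          (fun j => ∃ c : ℤ, 0 < c ∧ π (F.v j) = c • Pi.single s 1) :=
        Finset.mem_filter.mpr ⟨Finset.mem_univ _, hj'⟩
      rw [hS, Finset.mem_singleton] at this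
      exact this
    have hja0 : j = a0 := hmem j hj
    subst hja0
    obtain ⟨c, hc, hπ⟩ := hj
    have hcs : π (F.v j) s = c := by rw [hπ]; simp
    rw [hcs] at hval
    have hw : 1 ≤ F.w j := F.w_pos j
    have hc' : 1 ≤ c := hc
    have hw1 : F.w j = 1 := by nlinarith
    have hc1 : c = 1 := by nlinarith
    subst hc1
    rw [one_smul] at hπ
    exact ⟨hw1, hπ, hmem⟩
  -- Uniqueness for the `-(1,…,1)`-type ray
  have key3 : ∀ j : Fin q, (∃ c : ℤ, 0 < c ∧ π (F.v j) = fun _ => -c) →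
      F.w j = 1 ∧ π (F.v j) = (fun _ => (-1 : ℤ)) ∧
        ∀ j', (∃ c : ℤ, 0 < c ∧ π (F.v j') = fun _ => -c) → j' = j := by
    intro j hj
    have hf : ∀ j' ∈ Finset.univ.filter
        (fun j => ∃ c : ℤ, 0 < c ∧ π (F.v j) = fun _ => -c),
        1 ≤ F.w j' * (-(π (F.v j') ⟨0, hk⟩)) := by
      intro j' hj'
      rw [Finset.mem_filter] at hj'
      obtain ⟨-, c, hc, hπ⟩ := hj'
      have hcs : -(π (F.v j') ⟨0, hk⟩) = c := by rw [hπ]; simp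
      rw [hcs]
      have hw : 1 ≤ F.w j' := F.w_pos j'
      have hc' : 1 ≤ c := hc
      nlinarith
    obtain ⟨a0, hS, hval⟩ := sum_eq_one_unique
      (Finset.univ.filter (fun j => ∃ c : ℤ, 0 < c ∧ π (F.v j) = fun _ => -c))
      (fun j => F.w j * (-(π (F.v j) ⟨0, hk⟩))) hf h3
    have hmem : ∀ j', (∃ c : ℤ, 0 < c ∧ π (F.v j') = fun _ => -c) → j' = a0 := by
      intro j' hj'
      have : j' ∈ Finset.univ.filter
          (fun j => ∃ c : ℤ, 0 < c ∧ π (F.v j) = fun _ => -c) :=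
        Finset.mem_filter.mpr ⟨Finset.mem_univ _, hj'⟩
      rw [hS, Finset.mem_singleton] at this
      exact this
    have hja0 : j = a0 := hmem j hj
    subst hja0
    obtain ⟨c, hc, hπ⟩ := hj
    have hcs : -(π (F.v j) ⟨0, hk⟩) = c := by rw [hπ]; simp
    rw [hcs] at hval
    have hw : 1 ≤ F.w j := F.w_pos j
    have hc' : 1 ≤ c := hc
    have hw1 : F.w j = 1 := by nlinarith
    have hc1 : c = 1 := by nlinarith
    subst hc1
    exact ⟨hw1, hπ, hmem⟩
  intro a b hab ha hb
  rcases h1 a with h0a | ⟨s, ca, hca, hπa⟩ | hsta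
  · exact absurd h0a ha
  · -- a is of type e_s
    obtain ⟨hwa, hva, huniqa⟩ := key2 s a ⟨ca, hca, hπa⟩
    rcases h1 b with h0b | ⟨t, cb, hcb, hπb⟩ | hstb
    · exact absurd h0b hb
    · -- b is of type e_t
      obtain ⟨hwb, hvb, huniqb⟩ := key2 t b ⟨cb, hcb, hπb⟩
      by_cases hst : s = t
      · exact absurd (huniqb a ⟨ca, by rw [← hst]; exact ⟨hca, hπa⟩⟩) hab
      · have hts : ¬ t = s := fun h => hst h.symm
        refine ⟨fun j => π (Pi.single j 1) s - π (Pi.single j 1) t, hab, hwa, hwb, ?_, ?_, ?_⟩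
        · rw [dotZ_sub, dotZ_proj, dotZ_proj, hva]
          simp [Pi.single_apply, hts]
        · rw [dotZ_sub, dotZ_proj, dotZ_proj, hvb]
          simp [Pi.single_apply, hst]
        · intro j hja hjb
          rw [dotZ_sub, dotZ_proj, dotZ_proj]
          rcases h1 j with h0 | ⟨u, c, hc, hπj⟩ | ⟨c, hc, hπj⟩
          · rw [h0]; simp
          · by_cases hus : u = s
            · exact absurd (huniqa j ⟨c, hc, by rw [← hus]; exact hπj⟩) hja
            · by_cases hut : u = t
              · exact absurd (huniqb j ⟨c, hc, by rw [← hut]; exact hπj⟩) hjb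
              · rw [hπj]
                simp [Pi.single_apply, show ¬ s = u from fun h => hus h.symm,
                  show ¬ t = u from fun h => hut h.symm]
          · rw [hπj]; simp
    · -- b is of type -(1,…,1)
      obtain ⟨hwb, hvb, huniqb⟩ := key3 b hstb
      refine ⟨fun j => π (Pi.single j 1) s, hab, hwa, hwb, ?_, ?_, ?_⟩
      · rw [dotZ_proj, hva]; simp
      · rw [dotZ_proj, hvb]
      · intro j hja hjb
        rw [dotZ_proj]
        rcases h1 j with h0 | ⟨u, c, hc, hπj⟩ | hstj
        · rw [h0]; simp
        · by_cases hus : u = s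
          · exact absurd (huniqa j ⟨c, hc, by rw [← hus]; exact hπj⟩) hja
          · rw [hπj]
            simp [Pi.single_apply, show ¬ s = u from fun h => hus h.symm]
        · exact absurd (huniqb j hstj) hjb
  · -- a is of type -(1,…,1)
    obtain ⟨hwa, hva, huniqa⟩ := key3 a hsta
    rcases h1 b with h0b | ⟨t, cb, hcb, hπb⟩ | hstb
    · exact absurd h0b hb
    · -- b is of type e_t
      obtain ⟨hwb, hvb, huniqb⟩ := key2 t b ⟨cb, hcb, hπb⟩
      refine ⟨fun j => -(π (Pi.single j 1) t), hab, hwa, hwb, ?_, ?_, ?_⟩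
      · rw [dotZ_neg, dotZ_proj, hva]; simp
      · rw [dotZ_neg, dotZ_proj, hvb]; simp
      · intro j hja hjb
        rw [dotZ_neg, dotZ_proj]
        rcases h1 j with h0 | ⟨u, c, hc, hπj⟩ | hstj
        · rw [h0]; simp
        · by_cases hut : u = t
          · exact absurd (huniqb j ⟨c, hc, by rw [← hut]; exact hπj⟩) hjb
          · rw [hπj]
            simp [Pi.single_apply, show ¬ t = u from fun h => hut h.symm]
        · exact absurd (huniqa j hstj) hja
    · -- both of type -(1,…,1): impossible
      obtain ⟨-, -, huniqa'⟩ := key3 a hsta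
      exact absurd (huniqa' b hstb) (Ne.symm hab)
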